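/- Let G be the subgroup of O(4) generated by the maximal torus T² (acting on S³ ⊂ ℂ² by (z, w) ↦ (e^{iθ₁}z, e^{iθ₂}w)) together with the coordinate-swap isometry (z, w) ↦ (w, z). Then the diameter of S³/G equals π/4; that is, the supremum over pairs p = (p₁,p₂), q = (q₁,q₂) ∈ S³ of the minimum of inf_{θ₁,θ₂} arccos(Re(e^{iθ₁}p₁·conj(q₁) + e^{iθ₂}p₂·conj(q₂))) and inf_{θ₁,θ₂} arccos(Re(e^{iθ₁}p₂·conj(q₁) + e^{iθ₂}p₁·conj(q₂))) equals π/4. -/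

import Mathlib

open Real Complex

lemma arccos_antitone : Antitone Real.arccos := by
  intro x y h
  unfold Real.arccos
  exact sub_le_sub_left (Real.monotone_arcsin h) _

lemma rot_to_abs (z : ℂ) :
    Complex.exp ((-(Complex.arg z) : ℝ) * Complex.I) * z = (‖z‖ : ℂ) := by
  rw [Complex.ofReal_neg, neg_mul, Complex.exp_neg,
    inv_mul_eq_iff_eq_mul₀ (Complex.exp_ne_zero _)]
  nth_rewrite 1 [← Complex.norm_mul_exp_arg_mul_I z]
  exact mul_comm _ _

lemma key_inf (p₁ q₁ p₂ q₂ : ℂ) :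
    sInf {t : ℝ | ∃ θ₁ θ₂ : ℝ,
        t = Real.arccos ((Complex.exp (θ₁ * Complex.I) * p₁ * (starRingEnd ℂ) q₁ +
          Complex.exp (θ₂ * Complex.I) * p₂ * (starRingEnd ℂ) q₂).re)} =
    Real.arccos (‖p₁‖ * ‖q₁‖ + ‖p₂‖ * ‖q₂‖) := by
  have habs1 : ‖p₁ * (starRingEnd ℂ) q₁‖ = ‖p₁‖ * ‖q₁‖ := by
    rw [norm_mul, Complex.norm_conj]
  have habs2 : ‖p₂ * (starRingEnd ℂ) q₂‖ = ‖p₂‖ * ‖q₂‖ := by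
    rw [norm_mul, Complex.norm_conj]
  apply le_antisymm
  · apply csInf_le
    · exact ⟨0, fun t ⟨θ₁, θ₂, ht⟩ => ht ▸ Real.arccos_nonneg _⟩
    · refine ⟨-(Complex.arg (p₁ * (starRingEnd ℂ) q₁)), -(Complex.arg (p₂ * (starRingEnd ℂ) q₂)), ?_⟩
      rw [mul_assoc, mul_assoc, rot_to_abs, rot_to_abs]
      rw [← Complex.ofReal_add, Complex.ofReal_re, habs1, habs2]
  · have hne : Set.Nonempty {t : ℝ | ∃ θ₁ θ₂ : ℝ,
        t = Real.arccos ((Complex.exp (θ₁ * Complex.I) * p₁ * (starRingEnd ℂ) q₁ +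
          Complex.exp (θ₂ * Complex.I) * p₂ * (starRingEnd ℂ) q₂).re)} := ⟨_, 0, 0, rfl⟩
    apply le_csInf hne
    rintro t ⟨θ₁, θ₂, rfl⟩
    apply arccos_antitone
    calc (Complex.exp (θ₁ * Complex.I) * p₁ * (starRingEnd ℂ) q₁ +
          Complex.exp (θ₂ * Complex.I) * p₂ * (starRingEnd ℂ) q₂).re
        ≤ ‖Complex.exp (θ₁ * Complex.I) * p₁ * (starRingEnd ℂ) q₁ +
          Complex.exp (θ₂ * Complex.I) * p₂ * (starRingEnd ℂ) q₂‖ := Complex.re_le_norm _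
      _ ≤ ‖Complex.exp (θ₁ * Complex.I) * p₁ * (starRingEnd ℂ) q₁‖ +
          ‖Complex.exp (θ₂ * Complex.I) * p₂ * (starRingEnd ℂ) q₂‖ :=
          norm_add_le _ _
      _ = ‖p₁‖ * ‖q₁‖ + ‖p₂‖ * ‖q₂‖ := by
          rw [norm_mul, norm_mul, norm_mul, norm_mul, Complex.norm_exp_ofReal_mul_I,
            Complex.norm_exp_ofReal_mul_I, Complex.norm_conj, Complex.norm_conj, one_mul, one_mul]

lemma arccos_sqrt2div2 : Real.arccos (Real.sqrt 2 / 2) = π / 4 := by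
  rw [← Real.cos_pi_div_four]
  exact Real.arccos_cos (by positivity) (by linarith [Real.pi_pos])

/-- Let `G ⊂ O(4)` be generated by the maximal torus
`(z, w) ↦ (e^{iθ₁}z, e^{iθ₂}w)` together with the swap `(z, w) ↦ (w, z)`.  Then the
diameter of `S³/G` equals `π/4`: the supremum over pairs `p, q ∈ S³ ⊂ ℂ²` of the minimum
of the two torus orbit distances (from `(p₁,p₂)` and from `(p₂,p₁)` to `q`) is `π/4`. -/
theorem diameter_S3_mod_torus_and_swap :
    sSup {d : ℝ | ∃ p₁ p₂ q₁ q₂ : ℂ,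
        ‖p₁‖ ^ 2 + ‖p₂‖ ^ 2 = 1 ∧
        ‖q₁‖ ^ 2 + ‖q₂‖ ^ 2 = 1 ∧
        d = min
          (sInf {t : ℝ | ∃ θ₁ θ₂ : ℝ,
            t = Real.arccos ((Complex.exp (θ₁ * Complex.I) * p₁ * (starRingEnd ℂ) q₁ +
              Complex.exp (θ₂ * Complex.I) * p₂ * (starRingEnd ℂ) q₂).re)})
          (sInf {t : ℝ | ∃ θ₁ θ₂ : ℝ,
            t = Real.arccos ((Complex.exp (θ₁ * Complex.I) * p₂ * (starRingEnd ℂ) q₁ +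
              Complex.exp (θ₂ * Complex.I) * p₁ * (starRingEnd ℂ) q₂).re)})} =
      π / 4 := by
  have hs2 : Real.sqrt 2 ^ 2 = 2 := Real.sq_sqrt (by norm_num)
  have ub : ∀ d ∈ {d : ℝ | ∃ p₁ p₂ q₁ q₂ : ℂ,
        ‖p₁‖ ^ 2 + ‖p₂‖ ^ 2 = 1 ∧
        ‖q₁‖ ^ 2 + ‖q₂‖ ^ 2 = 1 ∧
        d = min
          (sInf {t : ℝ | ∃ θ₁ θ₂ : ℝ,
            t = Real.arccos ((Complex.exp (θ₁ * Complex.I) * p₁ * (starRingEnd ℂ) q₁ +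
              Complex.exp (θ₂ * Complex.I) * p₂ * (starRingEnd ℂ) q₂).re)})
          (sInf {t : ℝ | ∃ θ₁ θ₂ : ℝ,
            t = Real.arccos ((Complex.exp (θ₁ * Complex.I) * p₂ * (starRingEnd ℂ) q₁ +
              Complex.exp (θ₂ * Complex.I) * p₁ * (starRingEnd ℂ) q₂).re)})}, d ≤ π / 4 := by
    rintro d ⟨p₁, p₂, q₁, q₂, hp, hq, rfl⟩
    rw [key_inf, key_inf]
    set a := ‖p₁‖ with ha
    set b := ‖p₂‖ with hb
    set c := ‖q₁‖ with hc
    set e := ‖q₂‖ with he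
    have ha0 : 0 ≤ a := norm_nonneg _
    have hb0 : 0 ≤ b := norm_nonneg _
    have hc0 : 0 ≤ c := norm_nonneg _
    have he0 : 0 ≤ e := norm_nonneg _
    have hmax : Real.sqrt 2 / 2 ≤ max (a * c + b * e) (b * c + a * e) := by
      by_contra hcon
      push_neg at hcon
      rw [max_lt_iff] at hcon
      obtain ⟨h1, h2⟩ := hcon
      have hA0 : 0 ≤ a * c + b * e := by positivity
      have hB0 : 0 ≤ b * c + a * e := by positivity
      nlinarith [mul_nonneg (mul_nonneg ha0 hb0) (mul_nonneg hc0 he0),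
        sq_nonneg (a * c + b * e), sq_nonneg (b * c + a * e)]
    have h1 : min (Real.arccos (a * c + b * e)) (Real.arccos (b * c + a * e)) ≤
        Real.arccos (max (a * c + b * e) (b * c + a * e)) := by
      rcases le_total (a * c + b * e) (b * c + a * e) with h | h
      · rw [max_eq_right h]; exact min_le_right _ _
      · rw [max_eq_left h]; exact min_le_left _ _
    calc min (Real.arccos (a * c + b * e)) (Real.arccos (b * c + a * e))
        ≤ Real.arccos (max (a * c + b * e) (b * c + a * e)) := h1
      _ ≤ Real.arccos (Real.sqrt 2 / 2) := arccos_antitone hmax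
      _ = π / 4 := arccos_sqrt2div2
  have mem : (π / 4) ∈ {d : ℝ | ∃ p₁ p₂ q₁ q₂ : ℂ,
        ‖p₁‖ ^ 2 + ‖p₂‖ ^ 2 = 1 ∧
        ‖q₁‖ ^ 2 + ‖q₂‖ ^ 2 = 1 ∧
        d = min
          (sInf {t : ℝ | ∃ θ₁ θ₂ : ℝ,
            t = Real.arccos ((Complex.exp (θ₁ * Complex.I) * p₁ * (starRingEnd ℂ) q₁ +
              Complex.exp (θ₂ * Complex.I) * p₂ * (starRingEnd ℂ) q₂).re)})
          (sInf {t : ℝ | ∃ θ₁ θ₂ : ℝ,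
            t = Real.arccos ((Complex.exp (θ₁ * Complex.I) * p₂ * (starRingEnd ℂ) q₁ +
              Complex.exp (θ₂ * Complex.I) * p₁ * (starRingEnd ℂ) q₂).re)})} := by
    refine ⟨((Real.sqrt 2 / 2 : ℝ) : ℂ), ((Real.sqrt 2 / 2 : ℝ) : ℂ), 1, 0, ?_, ?_, ?_⟩
    · rw [Complex.norm_real, Real.norm_eq_abs, _root_.abs_of_nonneg (by positivity : (0:ℝ) ≤ Real.sqrt 2 / 2)]
      nlinarith
    · simp
    · rw [key_inf]
      rw [Complex.norm_real, Real.norm_eq_abs, _root_.abs_of_nonneg (by positivity : (0:ℝ) ≤ Real.sqrt 2 / 2)]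
      simp only [map_one, map_zero, norm_one, norm_zero, mul_one, mul_zero, add_zero]
      rw [min_self, arccos_sqrt2div2]
  exact le_antisymm (csSup_le ⟨_, mem⟩ ub) (le_csSup ⟨π / 4, ub⟩ mem)
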